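/- If f : X → Y is injective, then the induced map on choice functions C(f) : CY → CX, sending C to C^f with C^f(K) = f⁻¹[C(f[K])] ∩ K, is surjective. Concretely, given any choice function C over X, the choice function C' over Y defined by C'(K) = f[C(f⁻¹[K])] satisfies (C')^f = C. -/

import Mathlib

/-- If `f : X → Y` is injective, then the induced map on
choice functions `C ↦ C^f` is surjective: for any choice function `C`
over `X`, the choice function `C'` over `Y` with `C' K = f[C(f⁻¹[K])]`
satisfies `(C')^f = C`. -/
theorem choice_pullback_surjective_of_injective {X Y : Type*} (f : X → Y)
    (hf : Function.Injective f)
    (C : Set X → Set X) (hC : ∀ K : Set X, K.Finite → C K ⊆ K) :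
    ∃ C' : Set Y → Set Y,
      (∀ K : Set Y, K.Finite → C' K ⊆ K) ∧
      (∀ K : Set Y, C' K = f '' (C (f ⁻¹' K))) ∧
      (∀ K : Set X, K.Finite → f ⁻¹' (C' (f '' K)) ∩ K = C K) := by
  refine ⟨fun K => f '' (C (f ⁻¹' K)), ?_, fun K => rfl, ?_⟩
  · intro K hK
    have hfin : (f ⁻¹' K).Finite := Set.Finite.preimage hf.injOn hK
    calc f '' (C (f ⁻¹' K)) ⊆ f '' (f ⁻¹' K) := Set.image_mono (hC _ hfin)
      _ ⊆ K := Set.image_preimage_subset f K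
  · intro K hK
    rw [Set.preimage_image_eq _ hf, Set.preimage_image_eq _ hf,
      Set.inter_eq_self_of_subset_left (hC K hK)]
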